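/- arXiv:1802.01547 — 3 statements merged into one kernel-verified Lean document; each statement's English description precedes it below -/
import Mathlib

section
/- For every ω ∈ [0, π/2) there exist constants c > 0 and C > 0 such that for all z ∈ ℂ with Re z > 0 and 0 ≤ arg z ≤ ω one has c · coth(Re z) ≤ Re(coth z) ≤ C · coth(Re z), where coth z = cosh z / sinh z; moreover the upper bound holds with C = 1 for every z with Re z > 0. -/
open Real

noncomputable section

lemma re_coth_aux (z : ℂ) :
    (Complex.cosh z / Complex.sinh z).re =
      Real.sinh z.re * Real.cosh z.re / (Real.sinh z.re ^ 2 + Real.sin z.im ^ 2) := by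
  set x := z.re
  set y := z.im
  have hz : z = (x : ℂ) + (y : ℂ) * Complex.I := (Complex.re_add_im z).symm
  have hs : Complex.sinh z = (Real.sinh x * Real.cos y : ℝ) + (Real.cosh x * Real.sin y : ℝ) * Complex.I := by
    rw [hz, Complex.sinh_add, Complex.sinh_mul_I, Complex.cosh_mul_I]
    push_cast [Complex.ofReal_sinh, Complex.ofReal_cosh, Complex.ofReal_cos, Complex.ofReal_sin]
    ring
  have hc : Complex.cosh z = (Real.cosh x * Real.cos y : ℝ) + (Real.sinh x * Real.sin y : ℝ) * Complex.I := by
    rw [hz, Complex.cosh_add, Complex.sinh_mul_I, Complex.cosh_mul_I]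
    push_cast [Complex.ofReal_sinh, Complex.ofReal_cosh, Complex.ofReal_cos, Complex.ofReal_sin]
    ring
  rw [hs, hc, Complex.div_re]
  simp [Complex.normSq_apply, Complex.sinh_ofReal_re, Complex.cosh_ofReal_re,
    Complex.sin_ofReal_re, Complex.cos_ofReal_re]
  have hpyth : Real.cos y ^ 2 = 1 - Real.sin y ^ 2 := by
    have := Real.sin_sq_add_cos_sq y; linarith
  have hch : Real.cosh x ^ 2 = 1 + Real.sinh x ^ 2 := by
    have := Real.cosh_sq_sub_sinh_sq x; linarith
  rw [← add_div]
  congr 1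
  · linear_combination (Real.cosh x * Real.sinh x) * hpyth
  · linear_combination (Real.sinh x ^ 2) * hpyth + (Real.sin y ^ 2) * hch

lemma coth_upper (z : ℂ) (hx : 0 < z.re) :
    (Complex.cosh z / Complex.sinh z).re ≤ 1 * (Real.cosh z.re / Real.sinh z.re) := by
  rw [re_coth_aux, one_mul]
  have hs : 0 < Real.sinh z.re := Real.sinh_pos_iff.2 hx
  have hc : 0 < Real.cosh z.re := Real.cosh_pos _
  have hd : 0 < Real.sinh z.re ^ 2 + Real.sin z.im ^ 2 := by positivity
  rw [div_le_div_iff₀ hd hs]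
  nlinarith [sq_nonneg (Real.sin z.im), hc.le, hs.le]

/-- For every `ω ∈ [0, π/2)` there are constants `c, C > 0` such that
`c·coth(Re z) ≤ Re(coth z) ≤ C·coth(Re z)` whenever `Re z > 0` and `0 ≤ arg z ≤ ω`;
moreover the upper bound holds with `C = 1` for every `z` with `Re z > 0`. -/
theorem re_coth_comparable_coth_re :
    (∀ ω : ℝ, 0 ≤ ω → ω < π / 2 →
      ∃ c C : ℝ, 0 < c ∧ 0 < C ∧
        ∀ z : ℂ, 0 < z.re → 0 ≤ z.arg → z.arg ≤ ω →
          c * (Real.cosh z.re / Real.sinh z.re) ≤ (Complex.cosh z / Complex.sinh z).re ∧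
          (Complex.cosh z / Complex.sinh z).re ≤ C * (Real.cosh z.re / Real.sinh z.re)) ∧
    (∀ z : ℂ, 0 < z.re →
      (Complex.cosh z / Complex.sinh z).re ≤ 1 * (Real.cosh z.re / Real.sinh z.re)) := by
  constructor
  · intro ω hω0 hω
    refine ⟨Real.cos ω ^ 2, 1, ?_, one_pos, ?_⟩
    · have : 0 < Real.cos ω := Real.cos_pos_of_mem_Ioo ⟨by linarith [Real.pi_pos], hω⟩
      positivity
    intro z hx harg hargω
    refine ⟨?_, coth_upper z hx⟩
    rw [re_coth_aux]
    set x := z.re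
    set y := z.im
    have hs : 0 < Real.sinh x := Real.sinh_pos_iff.2 hx
    have hc : 0 < Real.cosh x := Real.cosh_pos _
    have hd : 0 < Real.sinh x ^ 2 + Real.sin y ^ 2 := by positivity
    have hcos : 0 < Real.cos ω := Real.cos_pos_of_mem_Ioo ⟨by linarith [Real.pi_pos], hω⟩
    -- y = x * tan (arg z)
    have hy : y = x * Real.tan z.arg := by
      rw [Complex.tan_arg]
      field_simp
      exact (mul_div_cancel_left₀ _ hx.ne').symm
    have htan_nonneg : 0 ≤ Real.tan z.arg :=
      Real.tan_nonneg_of_nonneg_of_le_pi_div_two harg (by linarith)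
    have htan_le : Real.tan z.arg ≤ Real.tan ω := by
      rcases eq_or_lt_of_le hargω with h | h
      · rw [h]
      · exact (Real.strictMonoOn_tan ⟨by linarith [Real.pi_pos], by linarith⟩
          ⟨by linarith [Real.pi_pos], hω⟩ h).le
    have hsin_sq : Real.sin y ^ 2 ≤ y ^ 2 := by
      rcases eq_or_ne y 0 with h | h
      · simp [h]
      · exact (Real.sin_sq_lt_sq h).le
    have hxs : x ≤ Real.sinh x := Real.self_le_sinh_iff.2 hx.le
    have hy2 : y ^ 2 ≤ Real.tan ω ^ 2 * Real.sinh x ^ 2 := by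
      rw [hy, mul_pow]
      have h1 : Real.tan z.arg ^ 2 ≤ Real.tan ω ^ 2 := by
        apply sq_le_sq' <;> nlinarith
      have h2 : x ^ 2 ≤ Real.sinh x ^ 2 := by nlinarith
      nlinarith [sq_nonneg (Real.tan z.arg), sq_nonneg x]
    have hct : Real.cos ω ^ 2 * Real.tan ω ^ 2 = Real.sin ω ^ 2 := by
      rw [Real.tan_eq_sin_div_cos, div_pow]
      field_simp
    have hpyth := Real.sin_sq_add_cos_sq ω
    rw [← mul_div_assoc, div_le_div_iff₀ hs hd]
    -- cos²ω * cosh x * (sinh²x + sin²y) ≤ sinh x * cosh x * sinh x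
    have h1 : Real.sin y ^ 2 ≤ Real.tan ω ^ 2 * Real.sinh x ^ 2 := hsin_sq.trans hy2
    have key : Real.cos ω ^ 2 * (Real.sinh x ^ 2 + Real.sin y ^ 2) ≤ Real.sinh x ^ 2 := by
      nlinarith [mul_le_mul_of_nonneg_left h1 (sq_nonneg (Real.cos ω)), hct, hpyth,
        sq_nonneg (Real.sinh x)]
    nlinarith [mul_le_mul_of_nonneg_right key hc.le]
  · exact fun z hx => coth_upper z hx
end
end

section
/- Sector bound for the classical Mehler (Hermite) kernel: for z ∈ ℂ with Re z > 0 and x, y ∈ ℝ^d define 𝓗_z^0(x,y) = (2π sinh(2z))^{-d/2} exp(-(1/4)(coth(z)|x-y|² + tanh(z)|x+y|²)), using the principal branch of the complex power. Then for every ω ∈ (0, π/2) there exists a constant c ∈ (0,1] such that for all z with Re z > 0 and 0 ≤ arg z ≤ ω and all x, y ∈ ℝ^d: |𝓗_z^0(x,y)| ≤ (2π sinh(2 Re z))^{-d/2} exp(-(c/4)(coth(Re z)|x-y|² + tanh(Re z)|x+y|²)). -/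
open Real

noncomputable section

/-- The classical Mehler (Hermite) kernel `𝓗_z^0(x, y)`, with the principal branch
of the complex power. -/
def mehlerKernel (d : ℕ) (z : ℂ) (x y : EuclideanSpace ℝ (Fin d)) : ℂ :=
  (2 * (Real.pi : ℂ) * Complex.sinh (2 * z)) ^ (-(d : ℂ) / 2) *
    Complex.exp (-(1 / 4 : ℂ) *
      ((Complex.cosh z / Complex.sinh z) * ((‖x - y‖ : ℝ) : ℂ) ^ 2
        + (Complex.sinh z / Complex.cosh z) * ((‖x + y‖ : ℝ) : ℂ) ^ 2))

lemma sinh_decomp' (a b : ℝ) :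
    Complex.sinh ((a : ℂ) + (b : ℂ) * Complex.I)
      = ((Real.sinh a * Real.cos b : ℝ) : ℂ) + ((Real.cosh a * Real.sin b : ℝ) : ℂ) * Complex.I := by
  rw [Complex.sinh_add, Complex.sinh_mul_I, Complex.cosh_mul_I, ← Complex.ofReal_sinh,
    ← Complex.ofReal_cosh, ← Complex.ofReal_sin, ← Complex.ofReal_cos]
  push_cast
  ring

lemma cosh_decomp' (a b : ℝ) :
    Complex.cosh ((a : ℂ) + (b : ℂ) * Complex.I)
      = ((Real.cosh a * Real.cos b : ℝ) : ℂ) + ((Real.sinh a * Real.sin b : ℝ) : ℂ) * Complex.I := by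
  rw [Complex.cosh_add, Complex.sinh_mul_I, Complex.cosh_mul_I, ← Complex.ofReal_sinh,
    ← Complex.ofReal_cosh, ← Complex.ofReal_sin, ← Complex.ofReal_cos]
  push_cast
  ring


lemma normSq_decomp (u v : ℝ) :
    Complex.normSq ((u : ℂ) + (v : ℂ) * Complex.I) = u ^ 2 + v ^ 2 := by
  simp only [Complex.normSq_apply, Complex.add_re, Complex.add_im, Complex.mul_re,
    Complex.mul_im, Complex.ofReal_re, Complex.ofReal_im, Complex.I_re, Complex.I_im]
  ring

lemma re_decomp (u v : ℝ) : ((u : ℂ) + (v : ℂ) * Complex.I).re = u := by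
  simp

lemma im_decomp (u v : ℝ) : ((u : ℂ) + (v : ℂ) * Complex.I).im = v := by
  simp

set_option maxHeartbeats 1000000 in
/-- Sector bound for the classical Mehler (Hermite) kernel: for every
`ω ∈ (0, π/2)` there is a constant `c ∈ (0, 1]` such that for all `z` with `Re z > 0`
and `0 ≤ arg z ≤ ω` and all `x, y ∈ ℝ^d`,
`|𝓗_z^0(x,y)| ≤ (2π sinh(2 Re z))^{-d/2} exp(-(c/4)(coth(Re z)|x-y|² + tanh(Re z)|x+y|²))`. -/
theorem mehlerKernel_sector_bound (d : ℕ) (hd : 1 ≤ d) (ω : ℝ) (hω0 : 0 < ω)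
    (hω : ω < π / 2) :
    ∃ c : ℝ, 0 < c ∧ c ≤ 1 ∧
      ∀ z : ℂ, 0 < z.re → 0 ≤ z.arg → z.arg ≤ ω →
        ∀ x y : EuclideanSpace ℝ (Fin d),
          ‖mehlerKernel d z x y‖
            ≤ (2 * Real.pi * Real.sinh (2 * z.re)) ^ (-(d : ℝ) / 2) *
              Real.exp (-(c / 4) *
                ((Real.cosh z.re / Real.sinh z.re) * ‖x - y‖ ^ 2
                  + (Real.sinh z.re / Real.cosh z.re) * ‖x + y‖ ^ 2)) := by

  have hcosω : 0 < Real.cos ω := Real.cos_pos_of_mem_Ioo ⟨by linarith, hω⟩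
  have hcos1 : Real.cos ω ≤ 1 := Real.cos_le_one ω
  refine ⟨Real.cos ω ^ 2, by positivity, by nlinarith, ?_⟩
  intro z hre harg hargω x y
  set a := z.re with ha
  set b := z.im with hb
  have hzeq : z = (a : ℂ) + (b : ℂ) * Complex.I := (Complex.re_add_im z).symm
  -- basic positivity
  have hSpos : 0 < Real.sinh a := Real.sinh_pos_iff.mpr hre
  have hCpos : 0 < Real.cosh a := Real.cosh_pos a
  have hS2pos : 0 < Real.sinh (2 * a) := Real.sinh_pos_iff.mpr (by linarith)
  have hπ : 0 < Real.pi := Real.pi_pos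
  -- bound on b
  have hb0 : 0 ≤ b := Complex.arg_nonneg_iff.mp harg
  have htan : b / a = Real.tan z.arg := (Complex.tan_arg z).symm
  have htanω : Real.tan z.arg ≤ Real.tan ω := by
    rcases eq_or_lt_of_le hargω with h | h
    · rw [h]
    · exact le_of_lt (Real.tan_lt_tan_of_nonneg_of_lt_pi_div_two harg hω h)
  have hbA : b ≤ a * Real.tan ω := by
    have := htan.trans_le htanω
    calc b = a * (b / a) := by field_simp
    _ ≤ a * Real.tan ω := by
      apply mul_le_mul_of_nonneg_left this (le_of_lt hre)
  have hbS : b ≤ Real.sinh a * Real.tan ω := by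
    have haS : a ≤ Real.sinh a := Real.self_le_sinh_iff.mpr hre.le
    have htannn : 0 ≤ Real.tan ω := Real.tan_nonneg_of_nonneg_of_le_pi_div_two hω0.le hω.le
    nlinarith
  have hsinb : Real.sin b ^ 2 ≤ b ^ 2 := by
    have := Real.abs_sin_le_abs (x := b)
    nlinarith [abs_nonneg b, abs_nonneg (Real.sin b), sq_abs b, sq_abs (Real.sin b),
      abs_nonneg (Real.sin b)]
  have hTcos : Real.cos ω ^ 2 * (1 + Real.tan ω ^ 2) = 1 := by
    have h := Real.inv_one_add_tan_sq (x := ω) (ne_of_gt hcosω)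
    field_simp at h ⊢
    linarith [h]
  -- key: sin b ^2 ≤ sinh a ^2 * tan ω ^2
  have hkey : Real.sin b ^ 2 ≤ Real.sinh a ^ 2 * Real.tan ω ^ 2 := by
    nlinarith [hbS, hb0, hsinb, hSpos, Real.tan_nonneg_of_nonneg_of_le_pi_div_two hω0.le hω.le]
  -- normSq computations
  have hpyth : Real.sin b ^ 2 + Real.cos b ^ 2 = 1 := Real.sin_sq_add_cos_sq b
  have hcoshsq : Real.cosh a ^ 2 = Real.sinh a ^ 2 + 1 := Real.cosh_sq a
  have hnsS : Complex.normSq (Complex.sinh z) = Real.sinh a ^ 2 + Real.sin b ^ 2 := by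
    rw [hzeq, sinh_decomp', normSq_decomp]
    linear_combination Real.sinh a ^ 2 * hpyth + Real.sin b ^ 2 * hcoshsq
  have hnsC : Complex.normSq (Complex.cosh z) = Real.cosh a ^ 2 - Real.sin b ^ 2 := by
    rw [hzeq, cosh_decomp', normSq_decomp]
    linear_combination Real.cosh a ^ 2 * hpyth - Real.sin b ^ 2 * hcoshsq
  have hnsSpos : 0 < Complex.normSq (Complex.sinh z) := by
    rw [hnsS]; nlinarith [sq_nonneg (Real.sin b)]
  have hnsCpos : 0 < Complex.normSq (Complex.cosh z) := by
    rw [hnsC]; nlinarith [hkey, hTcos, sq_nonneg (Real.sin b), sq_nonneg (Real.tan ω)]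
  -- real parts of coth and tanh
  have hRcoth : (Complex.cosh z / Complex.sinh z).re
      = Real.sinh a * Real.cosh a / (Real.sinh a ^ 2 + Real.sin b ^ 2) := by
    rw [Complex.div_re, hnsS]
    rw [hzeq, sinh_decomp', cosh_decomp', re_decomp, im_decomp, re_decomp, im_decomp,
      ← add_div]
    congr 1
    linear_combination (Real.sinh a * Real.cosh a) * hpyth
  have hRtanh : (Complex.sinh z / Complex.cosh z).re
      = Real.sinh a * Real.cosh a / (Real.cosh a ^ 2 - Real.sin b ^ 2) := by
    rw [Complex.div_re, hnsC]
    rw [hzeq, sinh_decomp', cosh_decomp', re_decomp, im_decomp, re_decomp, im_decomp,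
      ← add_div]
    congr 1
    linear_combination (Real.sinh a * Real.cosh a) * hpyth
  -- lower bounds
  have hcothBound : Real.cos ω ^ 2 * (Real.cosh a / Real.sinh a)
      ≤ (Complex.cosh z / Complex.sinh z).re := by
    have hden : 0 < Real.sinh a ^ 2 + Real.sin b ^ 2 := by
      nlinarith [sq_nonneg (Real.sin b)]
    rw [hRcoth, ← mul_div_assoc, div_le_div_iff₀ hSpos hden]
    have : Real.cos ω ^ 2 * (Real.sinh a ^ 2 + Real.sin b ^ 2) ≤ Real.sinh a ^ 2 := by
      nlinarith [hkey, hTcos, sq_nonneg (Real.cos ω)]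
    nlinarith [hCpos, hSpos]
  have htanhBound : Real.cos ω ^ 2 * (Real.sinh a / Real.cosh a)
      ≤ (Complex.sinh z / Complex.cosh z).re := by
    have h1 : Real.sinh a / Real.cosh a
        ≤ Real.sinh a * Real.cosh a / (Real.cosh a ^ 2 - Real.sin b ^ 2) := by
      have hden : 0 < Real.cosh a ^ 2 - Real.sin b ^ 2 := by rw [← hnsC]; exact hnsCpos
      rw [div_le_div_iff₀ hCpos hden]
      nlinarith [sq_nonneg (Real.sin b), hSpos]
    rw [hRtanh]
    calc Real.cos ω ^ 2 * (Real.sinh a / Real.cosh a) ≤ 1 * (Real.sinh a / Real.cosh a) := by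
          apply mul_le_mul_of_nonneg_right (by nlinarith) (by positivity)
      _ = Real.sinh a / Real.cosh a := one_mul _
      _ ≤ _ := h1
  -- |sinh 2z| ≥ sinh 2a
  have habsS2 : Real.sinh (2 * a) ≤ ‖Complex.sinh (2 * z)‖ := by
    have h2z : (2 : ℂ) * z = ((2*a : ℝ) : ℂ) + ((2*b : ℝ) : ℂ) * Complex.I := by
      rw [hzeq]; push_cast; ring
    have hns : Complex.normSq (Complex.sinh (2 * z))
        = (Real.sinh (2*a) * Real.cos (2*b)) ^ 2 + (Real.cosh (2*a) * Real.sin (2*b)) ^ 2 := by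
      rw [h2z, sinh_decomp', normSq_decomp]
    have hsq : Real.sinh (2*a) ^ 2 ≤ ‖Complex.sinh (2 * z)‖ ^ 2 := by
      rw [Complex.sq_norm, hns]
      have hp : Real.sin (2*b) ^ 2 + Real.cos (2*b) ^ 2 = 1 := Real.sin_sq_add_cos_sq _
      have hc : Real.cosh (2*a) ^ 2 = Real.sinh (2*a) ^ 2 + 1 := Real.cosh_sq _
      nlinarith [sq_nonneg (Real.sin (2*b)), sq_nonneg (Real.sinh (2*a) * Real.sin (2*b))]
    calc Real.sinh (2*a) = Real.sqrt (Real.sinh (2*a) ^ 2) := (Real.sqrt_sq hS2pos.le).symm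
      _ ≤ Real.sqrt (‖Complex.sinh (2 * z)‖ ^ 2) := Real.sqrt_le_sqrt hsq
      _ = ‖Complex.sinh (2 * z)‖ := Real.sqrt_sq (norm_nonneg _)
  have hsne : Complex.sinh (2 * z) ≠ 0 := by
    intro h
    rw [h, norm_zero] at habsS2
    linarith
  have hwne : (2 * (Real.pi : ℂ) * Complex.sinh (2 * z)) ≠ 0 :=
    mul_ne_zero (mul_ne_zero two_ne_zero (Complex.ofReal_ne_zero.mpr Real.pi_ne_zero)) hsne
  -- assemble
  rw [mehlerKernel, norm_mul]
  have hcpow : ‖(2 * (Real.pi : ℂ) * Complex.sinh (2 * z)) ^ (-(d : ℂ) / 2)‖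
      = ‖2 * (Real.pi : ℂ) * Complex.sinh (2 * z)‖ ^ (-(d : ℝ) / 2) := by
    rw [Complex.norm_cpow_of_ne_zero hwne]
    simp
  rw [hcpow, Complex.norm_exp]
  have habsw : ‖2 * (Real.pi : ℂ) * Complex.sinh (2 * z)‖
      = 2 * Real.pi * ‖Complex.sinh (2 * z)‖ := by
    rw [norm_mul, norm_mul]
    simp [Complex.norm_real, abs_of_pos hπ]
  have h1 : ‖2 * (Real.pi : ℂ) * Complex.sinh (2 * z)‖ ^ (-(d : ℝ) / 2)
      ≤ (2 * Real.pi * Real.sinh (2 * a)) ^ (-(d : ℝ) / 2) := by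
    apply Real.rpow_le_rpow_of_nonpos (by positivity)
    · rw [habsw]; nlinarith
    · have : (0:ℝ) ≤ d := Nat.cast_nonneg d
      linarith
  -- exponent bound
  set X := ‖x - y‖ with hX
  set Y := ‖x + y‖ with hY
  have hXnn : (0:ℝ) ≤ X ^ 2 := sq_nonneg X
  have hYnn : (0:ℝ) ≤ Y ^ 2 := sq_nonneg Y
  have hRe : (-(1 / 4 : ℂ) *
      ((Complex.cosh z / Complex.sinh z) * ((X : ℝ) : ℂ) ^ 2
        + (Complex.sinh z / Complex.cosh z) * ((Y : ℝ) : ℂ) ^ 2)).re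
      = -(1/4) * ((Complex.cosh z / Complex.sinh z).re * X ^ 2
        + (Complex.sinh z / Complex.cosh z).re * Y ^ 2) := by
    have hXre : (((X : ℝ) : ℂ) ^ 2).re = X ^ 2 := by
      rw [show ((X : ℝ) : ℂ) ^ 2 = ((X ^ 2 : ℝ) : ℂ) by push_cast; ring]; exact Complex.ofReal_re _
    have hXim : (((X : ℝ) : ℂ) ^ 2).im = 0 := by
      rw [show ((X : ℝ) : ℂ) ^ 2 = ((X ^ 2 : ℝ) : ℂ) by push_cast; ring]; exact Complex.ofReal_im _
    have hYre : (((Y : ℝ) : ℂ) ^ 2).re = Y ^ 2 := by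
      rw [show ((Y : ℝ) : ℂ) ^ 2 = ((Y ^ 2 : ℝ) : ℂ) by push_cast; ring]; exact Complex.ofReal_re _
    have hYim : (((Y : ℝ) : ℂ) ^ 2).im = 0 := by
      rw [show ((Y : ℝ) : ℂ) ^ 2 = ((Y ^ 2 : ℝ) : ℂ) by push_cast; ring]; exact Complex.ofReal_im _
    rw [show (-(1 / 4 : ℂ)) = (((-(1/4) : ℝ)) : ℂ) by norm_num, Complex.re_ofReal_mul,
      Complex.add_re, Complex.mul_re, Complex.mul_re, hXre, hXim, hYre, hYim]
    ring
  have h2 : Real.exp (-(1 / 4 : ℂ) *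
      ((Complex.cosh z / Complex.sinh z) * ((X : ℝ) : ℂ) ^ 2
        + (Complex.sinh z / Complex.cosh z) * ((Y : ℝ) : ℂ) ^ 2)).re
      ≤ Real.exp (-(Real.cos ω ^ 2 / 4) *
        ((Real.cosh a / Real.sinh a) * X ^ 2 + (Real.sinh a / Real.cosh a) * Y ^ 2)) := by
    rw [hRe]
    apply Real.exp_le_exp.mpr
    have e1 := mul_le_mul_of_nonneg_right hcothBound hXnn
    have e2 := mul_le_mul_of_nonneg_right htanhBound hYnn
    linarith [e1, e2]
  calc _ ≤ (2 * Real.pi * Real.sinh (2 * a)) ^ (-(d : ℝ) / 2) *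
        Real.exp (-(Real.cos ω ^ 2 / 4) *
        ((Real.cosh a / Real.sinh a) * X ^ 2 + (Real.sinh a / Real.cosh a) * Y ^ 2)) := by
        apply mul_le_mul h1 h2 (Real.exp_nonneg _) (by positivity)
    _ = _ := rfl
end
end

section
/- Let A be a finite set of nonzero vectors in ℝ^d and k : A → [0,∞). Then the weighted measure μ defined by dμ(x) = w(x) dx with w(x) = ∏_{α∈A} |⟨α, x⟩|^{2 k(α)} is a doubling measure: there exists a constant C > 0 such that for every x₀ ∈ ℝ^d and every r > 0, μ(B(x₀, 2r)) ≤ C · μ(B(x₀, r)). -/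
open MeasureTheory Metric
open scoped ENNReal

section Aux
variable {d : ℕ}

lemma coord_abs_le_norm (v : EuclideanSpace ℝ (Fin d)) (i : Fin d) : |v i| ≤ ‖v‖ := by
  rw [EuclideanSpace.norm_eq, ← Real.sqrt_sq_eq_abs]
  apply Real.sqrt_le_sqrt
  calc v i ^ 2 = ‖v i‖ ^ 2 := by rw [Real.norm_eq_abs, sq_abs]
  _ ≤ ∑ j, ‖v j‖ ^ 2 := Finset.single_le_sum (f := fun j => ‖v j‖^2) (fun j _ => sq_nonneg _) (Finset.mem_univ i)

lemma slab_volume (u : EuclideanSpace ℝ (Fin d)) (hu : ‖u‖ = 1)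
    (x₀ : EuclideanSpace ℝ (Fin d)) (r δ : ℝ) :
    volume {x | x ∈ ball x₀ r ∧ |(inner ℝ u x : ℝ)| < δ} ≤
      ENNReal.ofReal (2 * δ) * (ENNReal.ofReal (2 * r)) ^ (d - 1) := by
  classical
  have hd : d ≠ 0 := by
    rintro rfl
    have : u = 0 := Subsingleton.elim _ _
    simp [this] at hu
  haveI : NeZero d := ⟨hd⟩
  have hcard : Module.finrank ℝ (EuclideanSpace ℝ (Fin d)) = Fintype.card (Fin d) := by
    simp [finrank_euclideanSpace_fin]
  have horth : Orthonormal ℝ ((({0} : Set (Fin d))).restrict (fun _ => u)) := by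
    rw [orthonormal_iff_ite]
    intro i i'
    have : i = i' := Subsingleton.elim i i'
    subst this
    rw [if_pos rfl]
    change (inner ℝ u u : ℝ) = 1
    rw [real_inner_self_eq_norm_sq, hu]; norm_num
  obtain ⟨b, hb⟩ := horth.exists_orthonormalBasis_extension_of_card_eq hcard
  have hbj : b 0 = u := hb 0 rfl
  let y₀ : EuclideanSpace ℝ (Fin d) := b.repr x₀
  let I : Fin d → Set ℝ := fun i => if i = 0 then Set.Ioo (-δ) δ else Set.Ioo (y₀ i - r) (y₀ i + r)
  have hIm : ∀ i, MeasurableSet (I i) := by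
    intro i; by_cases h : i = 0 <;> simp [I, h]
  have hIvol : ∀ i, volume (I i) = if i = 0 then ENNReal.ofReal (2*δ) else ENNReal.ofReal (2*r) := by
    intro i
    by_cases h : i = 0
    · simp only [I, if_pos h, Real.volume_Ioo]; congr 1; ring
    · simp only [I, if_neg h, Real.volume_Ioo]; congr 1; ring
  have hpiMeas : MeasurableSet (Set.univ.pi I) := MeasurableSet.univ_pi hIm
  set Box : Set (EuclideanSpace ℝ (Fin d)) := ((MeasurableEquiv.toLp 2 (Fin d → ℝ)).symm) ⁻¹' Set.univ.pi I with hBox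
  have hBoxMeas : MeasurableSet Box := ((MeasurableEquiv.toLp 2 (Fin d → ℝ)).symm).measurable hpiMeas
  have hcoe : ∀ (y : EuclideanSpace ℝ (Fin d)) i, ((MeasurableEquiv.toLp 2 (Fin d → ℝ)).symm) y i = y i :=
    fun _ _ => rfl
  have hsub : {x | x ∈ ball x₀ r ∧ |(inner ℝ u x : ℝ)| < δ} ⊆ b.repr ⁻¹' Box := by
    rintro x ⟨hx1, hx2⟩
    simp only [Set.mem_preimage, hBox, Set.mem_univ_pi]
    intro i
    rw [hcoe]
    by_cases hij : i = 0
    · subst hij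
      have hval : (b.repr x) 0 = (inner ℝ u x : ℝ) := by
        rw [b.repr_apply_apply, hbj]
      simp only [I, if_pos rfl, Set.mem_Ioo, hval]
      exact abs_lt.mp hx2
    · simp only [I, if_neg hij, Set.mem_Ioo]
      have h1 : |(b.repr x) i - y₀ i| ≤ ‖x - x₀‖ := by
        have he : (b.repr x) i - y₀ i = (b.repr (x - x₀)) i := by
          rw [map_sub]; rfl
        rw [he, ← b.repr.norm_map (x - x₀)]
        exact coord_abs_le_norm _ i
      have h2 : ‖x - x₀‖ < r := by rwa [mem_ball, dist_eq_norm] at hx1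
      have h3 := abs_lt.mp (lt_of_le_of_lt h1 h2)
      constructor <;> linarith [h3.1, h3.2]
  calc volume {x | x ∈ ball x₀ r ∧ |(inner ℝ u x : ℝ)| < δ}
      ≤ volume (b.repr ⁻¹' Box) := measure_mono hsub
    _ = volume Box := b.measurePreserving_repr.measure_preimage hBoxMeas.nullMeasurableSet
    _ = (volume : Measure (Fin d → ℝ)) (Set.univ.pi I) :=
        (EuclideanSpace.volume_preserving_symm_measurableEquiv_toLp (Fin d)).measure_preimage
          hpiMeas.nullMeasurableSet
    _ = ∏ i, volume (I i) := volume_pi_pi I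
    _ = ENNReal.ofReal (2 * δ) * (ENNReal.ofReal (2 * r)) ^ (d - 1) := by
        rw [Finset.prod_congr rfl (fun i _ => hIvol i),
          ← Finset.mul_prod_erase Finset.univ _ (Finset.mem_univ (0 : Fin d)), if_pos rfl]
        congr 1
        rw [Finset.prod_congr rfl (fun i hi => if_neg (Finset.ne_of_mem_erase hi)),
          Finset.prod_const, Finset.card_erase_of_mem (Finset.mem_univ _), Finset.card_univ,
          Fintype.card_fin]

end Aux

set_option maxHeartbeats 1000000 in
/-- The measure `dμ = ∏_{α∈A} |⟨α,x⟩|^{2k(α)} dx` on `ℝ^d`, where `A`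
is a finite set of nonzero vectors and `k ≥ 0`, is a doubling measure. -/
theorem dunkl_weight_measure_is_doubling (d : ℕ)
    (A : Finset (EuclideanSpace ℝ (Fin d))) (hA : ∀ α ∈ A, α ≠ 0)
    (k : EuclideanSpace ℝ (Fin d) → ℝ) (hk : ∀ α ∈ A, 0 ≤ k α) :
    ∃ C : ℝ, 0 < C ∧ ∀ (x₀ : EuclideanSpace ℝ (Fin d)) (r : ℝ), 0 < r →
      (volume.withDensity fun x =>
          ENNReal.ofReal (∏ α ∈ A, |(inner ℝ α x : ℝ)| ^ (2 * k α))) (ball x₀ (2 * r))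
        ≤ ENNReal.ofReal C *
          (volume.withDensity fun x =>
            ENNReal.ofReal (∏ α ∈ A, |(inner ℝ α x : ℝ)| ^ (2 * k α))) (ball x₀ r) := by
  classical
  set W : EuclideanSpace ℝ (Fin d) → ℝ := fun x => ∏ α ∈ A, |(inner ℝ α x : ℝ)| ^ (2 * k α)
    with hWdef
  have hWnn : ∀ x, 0 ≤ W x := fun x =>
    Finset.prod_nonneg fun α _ => Real.rpow_nonneg (abs_nonneg _) _
  have hexp : ∀ α ∈ A, (0:ℝ) ≤ 2 * k α := fun α hα => mul_nonneg (by norm_num) (hk α hα)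
  have hWm : Measurable fun x => ENNReal.ofReal (W x) := by
    apply ENNReal.measurable_ofReal.comp
    apply Finset.measurable_prod
    intro α hα
    have : Continuous fun x : EuclideanSpace ℝ (Fin d) => |(inner ℝ α x : ℝ)| ^ (2 * k α) := by
      rw [continuous_iff_continuousAt]
      intro x
      exact ((continuous_const.inner continuous_id).abs.continuousAt).rpow_const
        (Or.inr (hexp α hα))
    exact this.measurable
  have happly : ∀ (t : Set (EuclideanSpace ℝ (Fin d))), MeasurableSet t →
      (volume.withDensity fun x =>
        ENNReal.ofReal (∏ α ∈ A, |(inner ℝ α x : ℝ)| ^ (2 * k α))) t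
        = ∫⁻ x in t, ENNReal.ofReal (W x) := by
    intro t ht
    rw [withDensity_apply _ ht]
  set V₁ := volume (ball (0 : EuclideanSpace ℝ (Fin d)) 1) with hV₁
  have hV₁pos : 0 < V₁ := measure_ball_pos _ _ one_pos
  have hV₁top : V₁ ≠ ⊤ := measure_ball_lt_top.ne
  set v := V₁.toReal with hv
  have hvpos : 0 < v := ENNReal.toReal_pos hV₁pos.ne' hV₁top
  have hV₁v : V₁ = ENNReal.ofReal v := (ENNReal.ofReal_toReal hV₁top).symm
  set N : ℝ := (A.card : ℝ) with hN
  have hNnn : (0:ℝ) ≤ N := Nat.cast_nonneg _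
  clear_value v N
  set ε : ℝ := min (1/3) (v / (12 * 2^d * (N+1))) with hε
  have hεpos : 0 < ε := lt_min (by norm_num) (by positivity)
  have hεle : ε ≤ 1/3 := min_le_left _ _
  have hεsmall : N * (3 * ε * 2^d) ≤ v / 4 := by
    have hP : (0:ℝ) < 12 * 2^d * (N+1) := by positivity
    have h1 : ε ≤ v / (12 * 2^d * (N+1)) := min_le_right _ _
    have h2 : ε * (12 * 2^d * (N+1)) ≤ v := by
      rw [← le_div_iff₀ hP]; exact h1
    have h3 : (0:ℝ) < 2^d := by positivity
    nlinarith [mul_nonneg hεpos.le h3.le, mul_nonneg (mul_nonneg hεpos.le h3.le) hNnn]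
  refine ⟨2^(d+1) * ∏ α ∈ A, (2/ε) ^ (2 * k α), by positivity, ?_⟩
  intro x₀ r hr
  set s : EuclideanSpace ℝ (Fin d) → ℝ := fun α => |(inner ℝ α x₀ : ℝ)| + ‖α‖ * r with hs
  have hspos : ∀ α ∈ A, 0 < s α := fun α hα =>
    add_pos_of_nonneg_of_pos (abs_nonneg _) (mul_pos (norm_pos_iff.2 (hA α hα)) hr)
  have hball : ∀ R : ℝ, 0 < R → volume (ball x₀ R) = ENNReal.ofReal (R^d) * V₁ := by
    intro R hR
    rw [hV₁, Measure.addHaar_ball_of_pos volume x₀ hR, finrank_euclideanSpace_fin]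
  -- pointwise upper bound on the double ball
  have hWup : ∀ x ∈ ball x₀ (2*r), W x ≤ ∏ α ∈ A, (2:ℝ)^(2*k α) * s α ^ (2*k α) := by
    intro x hx
    apply Finset.prod_le_prod (fun α _ => Real.rpow_nonneg (abs_nonneg _) _)
    intro α hα
    rw [← Real.mul_rpow (by norm_num) (hspos α hα).le]
    apply Real.rpow_le_rpow (abs_nonneg _) ?_ (hexp α hα)
    have h1 : (inner ℝ α x : ℝ) = inner ℝ α x₀ + inner ℝ α (x - x₀) := by
      rw [inner_sub_right]; ring
    have h2 : |(inner ℝ α (x - x₀) : ℝ)| ≤ ‖α‖ * ‖x - x₀‖ := abs_real_inner_le_norm α (x - x₀)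
    have h3 : ‖x - x₀‖ < 2 * r := by rwa [mem_ball, dist_eq_norm] at hx
    have h4 : |(inner ℝ α x : ℝ)| ≤ |(inner ℝ α x₀ : ℝ)| + ‖α‖ * ‖x - x₀‖ := by
      rw [h1]; exact (abs_add_le _ _).trans (by gcongr)
    have hnα : (0:ℝ) ≤ ‖α‖ := norm_nonneg _
    simp only [hs]
    nlinarith [abs_nonneg (inner ℝ α x₀ : ℝ), mul_le_mul_of_nonneg_left h3.le hnα]
  -- upper bound on the measure of the double ball
  have hup : (volume.withDensity fun x =>
      ENNReal.ofReal (∏ α ∈ A, |(inner ℝ α x : ℝ)| ^ (2 * k α))) (ball x₀ (2*r))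
      ≤ ENNReal.ofReal ((∏ α ∈ A, (2:ℝ)^(2*k α) * s α ^(2*k α)) * ((2*r)^d * v)) := by
    rw [happly _ measurableSet_ball]
    have hprodnn : (0:ℝ) ≤ ∏ α ∈ A, (2:ℝ)^(2*k α) * s α ^(2*k α) :=
      Finset.prod_nonneg fun α hα =>
        mul_nonneg (Real.rpow_nonneg (by norm_num) _) (Real.rpow_nonneg (hspos α hα).le _)
    calc ∫⁻ x in ball x₀ (2*r), ENNReal.ofReal (W x)
        ≤ ∫⁻ _ in ball x₀ (2*r),
            ENNReal.ofReal (∏ α ∈ A, (2:ℝ)^(2*k α) * s α ^(2*k α)) :=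
          setLIntegral_mono' measurableSet_ball
            (fun x hx => ENNReal.ofReal_le_ofReal (hWup x hx))
      _ = ENNReal.ofReal (∏ α ∈ A, (2:ℝ)^(2*k α) * s α ^(2*k α)) * volume (ball x₀ (2*r)) :=
          setLIntegral_const _ _
      _ = ENNReal.ofReal ((∏ α ∈ A, (2:ℝ)^(2*k α) * s α ^(2*k α)) * ((2*r)^d * v)) := by
          rw [hball (2*r) (by positivity), hV₁v, ← ENNReal.ofReal_mul (by positivity),
            ← ENNReal.ofReal_mul hprodnn]
  -- bad sets
  set S : EuclideanSpace ℝ (Fin d) → Set (EuclideanSpace ℝ (Fin d)) :=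
    fun α => {x | x ∈ ball x₀ r ∧ |(inner ℝ α x : ℝ)| < ε * s α} with hS
  have hSmeas : ∀ α, MeasurableSet (S α) := by
    intro α
    have hc : Continuous fun x : EuclideanSpace ℝ (Fin d) => |(inner ℝ α x : ℝ)| :=
      (continuous_const.inner continuous_id).abs
    exact measurableSet_ball.inter (hc.measurable measurableSet_Iio)
  have hSvol : ∀ α ∈ A, volume (S α) ≤ ENNReal.ofReal (3 * ε * 2^d * r^d) := by
    intro α hα
    have hαn : α ≠ 0 := hA α hα
    have hnα : (0:ℝ) < ‖α‖ := norm_pos_iff.2 hαn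
    have hd : d ≠ 0 := by
      rintro rfl
      exact hαn (Subsingleton.elim _ _)
    obtain ⟨m, rfl⟩ : ∃ m, d = m + 1 := ⟨d - 1, (Nat.succ_pred_eq_of_pos (Nat.pos_of_ne_zero hd)).symm⟩
    by_cases hcase : 2 * (‖α‖ * r) ≤ |(inner ℝ α x₀ : ℝ)|
    · have hempty : S α = ∅ := by
        ext x
        simp only [hS, Set.mem_setOf_eq, Set.mem_empty_iff_false, iff_false, not_and, not_lt]
        intro hx1
        have h3 : ‖x - x₀‖ < r := by rwa [mem_ball, dist_eq_norm] at hx1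
        have h1 : (inner ℝ α x₀ : ℝ) = inner ℝ α x + inner ℝ α (x₀ - x) := by
          rw [inner_sub_right]; ring
        have h2 : |(inner ℝ α (x₀ - x) : ℝ)| ≤ ‖α‖ * ‖x₀ - x‖ := abs_real_inner_le_norm α (x₀ - x)
        have h3' : ‖x₀ - x‖ < r := by rwa [norm_sub_rev]
        have h4 : |(inner ℝ α x₀ : ℝ)| ≤ |(inner ℝ α x : ℝ)| + ‖α‖ * r := by
          rw [h1]
          refine (abs_add_le _ _).trans ?_
          have := mul_le_mul_of_nonneg_left h3'.le hnα.le
          linarith [h2]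
        -- now |inner ℝ α x| ≥ |inner ℝ α x₀| - ‖α‖r ≥ ε * s α  since |inner ℝ α x₀| ≥ 2‖α‖r, ε ≤ 1/3
        simp only [hs]
        nlinarith [mul_pos hnα hr, abs_nonneg (inner ℝ α x₀ : ℝ)]
      rw [hempty]
      simp
    · push_neg at hcase
      set u : EuclideanSpace ℝ (Fin (m+1)) := ‖α‖⁻¹ • α with hu
      have hunorm : ‖u‖ = 1 := norm_smul_inv_norm hαn
      have hinner : ∀ x : EuclideanSpace ℝ (Fin (m+1)), (inner ℝ u x : ℝ) = ‖α‖⁻¹ * inner ℝ α x := by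
        intro x
        rw [hu, real_inner_smul_left]
      have hsub : S α ⊆ {x | x ∈ ball x₀ r ∧ |(inner ℝ u x : ℝ)| < 3 * ε * r} := by
        rintro x ⟨hx1, hx2⟩
        refine ⟨hx1, ?_⟩
        rw [hinner, abs_mul, abs_of_nonneg (inv_nonneg.2 hnα.le)]
        rw [inv_mul_lt_iff₀ hnα]
        calc |(inner ℝ α x : ℝ)| < ε * s α := hx2
          _ ≤ ε * (3 * (‖α‖ * r)) := by
              apply mul_le_mul_of_nonneg_left ?_ hεpos.le
              simp only [hs]
              nlinarith
          _ = ‖α‖ * (3 * ε * r) := by ring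
      calc volume (S α) ≤ volume {x | x ∈ ball x₀ r ∧ |(inner ℝ u x : ℝ)| < 3 * ε * r} :=
            measure_mono hsub
        _ ≤ ENNReal.ofReal (2 * (3 * ε * r)) * (ENNReal.ofReal (2 * r)) ^ ((m+1) - 1) :=
            slab_volume u hunorm x₀ r _
        _ ≤ ENNReal.ofReal (3 * ε * 2^(m+1) * r^(m+1)) := by
            rw [← ENNReal.ofReal_pow (by positivity), ← ENNReal.ofReal_mul (by positivity)]
            apply ENNReal.ofReal_le_ofReal
            apply le_of_eq
            simp only [Nat.add_sub_cancel]
            rw [mul_pow]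
            ring
  -- the union of bad sets is small
  have hBadvol : volume (⋃ α ∈ A, S α) ≤ ENNReal.ofReal (r^d * (v/4)) := by
    calc volume (⋃ α ∈ A, S α) ≤ ∑ α ∈ A, volume (S α) := measure_biUnion_finset_le _ _
      _ ≤ ∑ β ∈ A, ENNReal.ofReal (3 * ε * 2^d * r^d) := Finset.sum_le_sum hSvol
      _ = (A.card : ℝ≥0∞) * ENNReal.ofReal (3 * ε * 2^d * r^d) := by
          rw [Finset.sum_const, nsmul_eq_mul]
      _ ≤ ENNReal.ofReal (r^d * (v/4)) := by
          rw [← ENNReal.ofReal_natCast, ← ENNReal.ofReal_mul (Nat.cast_nonneg _)]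
          apply ENNReal.ofReal_le_ofReal
          have hrd : (0:ℝ) ≤ r^d := by positivity
          calc (A.card : ℝ) * (3 * ε * 2^d * r^d) = (N * (3 * ε * 2^d)) * r^d := by
                rw [hN]; ring
            _ ≤ (v/4) * r^d := mul_le_mul_of_nonneg_right hεsmall hrd
            _ = r^d * (v/4) := by ring
  -- the good set
  set G : Set (EuclideanSpace ℝ (Fin d)) := ball x₀ r \ ⋃ α ∈ A, S α with hG
  have hGmeas : MeasurableSet G :=
    measurableSet_ball.diff (MeasurableSet.biUnion A.countable_toSet (fun α _ => hSmeas α))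
  have hGvol : ENNReal.ofReal (r^d * (v/2)) ≤ volume G := by
    have hsub : ball x₀ r ⊆ G ∪ ⋃ α ∈ A, S α := by
      intro x hx
      by_cases hxb : x ∈ ⋃ α ∈ A, S α
      · exact Or.inr hxb
      · exact Or.inl ⟨hx, hxb⟩
    have h1 : volume (ball x₀ r) ≤ volume G + ENNReal.ofReal (r^d * (v/4)) :=
      (measure_mono hsub).trans ((measure_union_le _ _).trans (by gcongr))
    have h2 : ENNReal.ofReal (r^d * (v/2)) + ENNReal.ofReal (r^d * (v/4))
        ≤ volume G + ENNReal.ofReal (r^d * (v/4)) := by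
      calc ENNReal.ofReal (r^d * (v/2)) + ENNReal.ofReal (r^d * (v/4))
          = ENNReal.ofReal (r^d * (v/2) + r^d * (v/4)) := by
            rw [ENNReal.ofReal_add (by positivity) (by positivity)]
        _ ≤ ENNReal.ofReal (r^d * v) := by
            apply ENNReal.ofReal_le_ofReal
            nlinarith [pow_pos hr d]
        _ = volume (ball x₀ r) := by
            rw [hball r hr, hV₁v, ← ENNReal.ofReal_mul (by positivity)]
        _ ≤ volume G + ENNReal.ofReal (r^d * (v/4)) := h1
    exact ENNReal.le_of_add_le_add_right ENNReal.ofReal_ne_top h2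
  -- pointwise lower bound on the good set
  have hWlow : ∀ x ∈ G, (∏ α ∈ A, ε^(2*k α) * s α^(2*k α)) ≤ W x := by
    intro x hx
    obtain ⟨hxball, hxbad⟩ := hx
    apply Finset.prod_le_prod (fun α hα =>
      mul_nonneg (Real.rpow_nonneg hεpos.le _) (Real.rpow_nonneg (hspos α hα).le _))
    intro α hα
    rw [← Real.mul_rpow hεpos.le (hspos α hα).le]
    apply Real.rpow_le_rpow (by positivity) ?_ (hexp α hα)
    by_contra hlt
    push_neg at hlt
    exact hxbad (Set.mem_biUnion hα ⟨hxball, hlt⟩)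
  -- lower bound on the measure of the ball
  have hprodlow_nn : (0:ℝ) ≤ ∏ α ∈ A, ε^(2*k α) * s α^(2*k α) :=
    Finset.prod_nonneg fun α hα =>
      mul_nonneg (Real.rpow_nonneg hεpos.le _) (Real.rpow_nonneg (hspos α hα).le _)
  have hlow : ENNReal.ofReal ((∏ α ∈ A, ε^(2*k α) * s α^(2*k α)) * (r^d * (v/2)))
      ≤ (volume.withDensity fun x =>
          ENNReal.ofReal (∏ α ∈ A, |(inner ℝ α x : ℝ)| ^ (2 * k α))) (ball x₀ r) := by
    rw [happly _ measurableSet_ball]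
    calc ENNReal.ofReal ((∏ α ∈ A, ε^(2*k α) * s α^(2*k α)) * (r^d * (v/2)))
        = ENNReal.ofReal (∏ α ∈ A, ε^(2*k α) * s α^(2*k α)) * ENNReal.ofReal (r^d * (v/2)) :=
          ENNReal.ofReal_mul hprodlow_nn
      _ ≤ ENNReal.ofReal (∏ α ∈ A, ε^(2*k α) * s α^(2*k α)) * volume G := by gcongr
      _ = ∫⁻ _ in G, ENNReal.ofReal (∏ α ∈ A, ε^(2*k α) * s α^(2*k α)) :=
          (setLIntegral_const _ _).symm
      _ ≤ ∫⁻ x in G, ENNReal.ofReal (W x) :=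
          setLIntegral_mono' hGmeas (fun x hx => ENNReal.ofReal_le_ofReal (hWlow x hx))
      _ ≤ ∫⁻ x in ball x₀ r, ENNReal.ofReal (W x) := lintegral_mono_set Set.diff_subset
  -- combine
  refine hup.trans (le_trans ?_ (mul_le_mul_right hlow _))
  rw [← ENNReal.ofReal_mul (by positivity)]
  apply ENNReal.ofReal_le_ofReal
  apply le_of_eq
  have hprodid : (∏ α ∈ A, (2/ε)^(2*k α)) * (∏ α ∈ A, ε^(2*k α) * s α^(2*k α))
      = ∏ α ∈ A, (2:ℝ)^(2*k α) * s α^(2*k α) := by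
    rw [← Finset.prod_mul_distrib]
    apply Finset.prod_congr rfl
    intro α hα
    rw [← mul_assoc, ← Real.mul_rpow (by positivity) hεpos.le, div_mul_cancel₀ _ hεpos.ne']
  calc (∏ α ∈ A, (2:ℝ)^(2*k α) * s α ^(2*k α)) * ((2*r)^d * v)
      = ((∏ α ∈ A, (2/ε)^(2*k α)) * (∏ α ∈ A, ε^(2*k α) * s α^(2*k α))) * ((2*r)^d * v) := by
        rw [hprodid]
    _ = (2^(d+1) * ∏ α ∈ A, (2/ε)^(2*k α)) *
        ((∏ α ∈ A, ε^(2*k α) * s α^(2*k α)) * (r^d * (v/2))) := by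
        rw [mul_pow]
        ring
end
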